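/- Let p be a prime and let R be a Noetherian commutative ring of characteristic p which is a Jacobson ring. Then R is semi F-regular if and only if R is weakly F-regular; that is, every ideal of R_f is tightly closed for every f ∈ R if and only if every ideal of R is tightly closed. -/

import Mathlib

/-- `offMinimal S` is `S°`, the set of elements of `S` lying outside every minimal prime. -/
def offMinimal (S : Type*) [CommRing S] : Set S :=
  {c : S | ∀ P ∈ minimalPrimes S, c ∉ P}

/-- The bracket power `J^[q]`, generated by `q`-th powers of elements of `J`. -/
def bracketPow {S : Type*} [CommRing S] (J : Ideal S) (q : ℕ) : Ideal S :=
  Ideal.span ((fun a => a ^ q) '' (J : Set S))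

/-- The tight closure `J^*` of an ideal `J` in a ring of characteristic `p`. -/
def tightClosure (p : ℕ) {S : Type*} [CommRing S] (J : Ideal S) : Set S :=
  {z : S | ∃ c ∈ offMinimal S, ∃ e₀ : ℕ, ∀ e : ℕ, e₀ ≤ e →
    c * z ^ p ^ e ∈ bracketPow J (p ^ e)}

/-- A ring `S` is weakly F-regular (with respect to `p`) if every ideal is tightly closed. -/
def WeaklyFRegular (p : ℕ) (S : Type*) [CommRing S] : Prop :=
  ∀ J : Ideal S, tightClosure p J = (J : Set S)

/-- A ring `S` is semi F-regular (with respect to `p`) if for every `f ∈ S` the localization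
`S_f` is weakly F-regular. -/
def SemiFRegular (p : ℕ) (S : Type*) [CommRing S] : Prop :=
  ∀ f : S, WeaklyFRegular p (Localization.Away f)

section Basic
variable {S : Type*} [CommRing S]

lemma one_mem_offMinimal : (1 : S) ∈ offMinimal S := by
  intro P hP h1
  exact hP.1.1.ne_top ((Ideal.eq_top_iff_one P).mpr h1)

lemma pow_mem_bracketPow {J : Ideal S} {a : S} (ha : a ∈ J) (q : ℕ) :
    a ^ q ∈ bracketPow J q :=
  Ideal.subset_span ⟨a, ha, rfl⟩

lemma bracketPow_mono {J J' : Ideal S} (h : J ≤ J') (q : ℕ) :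
    bracketPow J q ≤ bracketPow J' q :=
  Ideal.span_mono (Set.image_mono h)

lemma subset_tightClosure (p : ℕ) (J : Ideal S) : (J : Set S) ⊆ tightClosure p J := by
  intro z hz
  exact ⟨1, one_mem_offMinimal, 0, fun e _ => by
    rw [one_mul]; exact pow_mem_bracketPow hz _⟩

lemma tightClosure_mul_mem (p : ℕ) {J : Ideal S} {z : S} (hz : z ∈ tightClosure p J) (a : S) :
    a * z ∈ tightClosure p J := by
  obtain ⟨c, hc, e₀, he⟩ := hz
  refine ⟨c, hc, e₀, fun e he' => ?_⟩
  have := (bracketPow J (p ^ e)).mul_mem_left (a ^ p ^ e) (he e he')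
  convert this using 1
  ring

lemma tightClosure_mono (p : ℕ) {J J' : Ideal S} (h : J ≤ J') :
    tightClosure p J ⊆ tightClosure p J' := by
  rintro z ⟨c, hc, e₀, he⟩
  exact ⟨c, hc, e₀, fun e he' => bracketPow_mono h _ (he e he')⟩

lemma weaklyFRegular_of_subsingleton [Subsingleton S] (p : ℕ) : WeaklyFRegular p S := by
  intro J
  apply Set.Subset.antisymm
  · intro z _; simpa using (show z = 0 from Subsingleton.elim _ _) ▸ J.zero_mem
  · exact subset_tightClosure p J

lemma bracketPow_span {p : ℕ} (hp : p.Prime) [CharP S p] (T : Set S) (e : ℕ) :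
    bracketPow (Ideal.span T) (p ^ e) = Ideal.span ((fun a => a ^ p ^ e) '' T) := by
  haveI : Fact p.Prime := ⟨hp⟩
  apply le_antisymm
  · rw [bracketPow, Ideal.span_le]
    rintro _ ⟨a, ha, rfl⟩
    simp only [SetLike.mem_coe] at ha ⊢
    induction ha using Submodule.span_induction with
    | mem x hx => exact Ideal.subset_span ⟨x, hx, rfl⟩
    | zero => rw [zero_pow (pow_ne_zero _ hp.ne_zero)]; exact Ideal.zero_mem _
    | add x y _ _ hx hy => rw [add_pow_char_pow]; exact Ideal.add_mem _ hx hy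
    | smul r x _ hx =>
        rw [smul_eq_mul, mul_pow]
        exact Ideal.mul_mem_left _ _ hx
  · exact Ideal.span_mono (Set.image_mono Ideal.subset_span)

lemma map_bracketPow_le {S' : Type*} [CommRing S'] (φ : S →+* S') (J : Ideal S) (q : ℕ) :
    Ideal.map φ (bracketPow J q) ≤ bracketPow (Ideal.map φ J) q := by
  rw [bracketPow, Ideal.map_span, ← Set.image_comp]
  apply Ideal.span_le.mpr
  rintro _ ⟨a, ha, rfl⟩
  simp only [Function.comp_apply, map_pow]
  exact pow_mem_bracketPow (Ideal.mem_map_of_mem φ ha) q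

lemma bracketPow_map_le {S' : Type*} [CommRing S'] {p : ℕ} (hp : p.Prime) [CharP S' p]
    (φ : S →+* S') (J : Ideal S) (e : ℕ) :
    bracketPow (Ideal.map φ J) (p ^ e) ≤ Ideal.map φ (bracketPow J (p ^ e)) := by
  rw [Ideal.map, bracketPow_span hp, Ideal.span_le]
  rintro _ ⟨_, ⟨a, ha, rfl⟩, rfl⟩
  show (φ a) ^ p ^ e ∈ _
  rw [← map_pow]
  exact Ideal.mem_map_of_mem φ (pow_mem_bracketPow ha _)

lemma radical_bracketPow {p : ℕ} (hp : p.Prime) (J : Ideal S) (e : ℕ) :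
    (bracketPow J (p ^ e)).radical = J.radical := by
  apply le_antisymm
  · apply Ideal.radical_mono
    rw [bracketPow, Ideal.span_le]
    rintro _ ⟨a, ha, rfl⟩
    exact Ideal.pow_mem_of_mem J ha _ (pow_pos hp.pos e)
  · rw [Ideal.radical_le_radical_iff]
    intro a ha
    exact Ideal.mem_radical_of_pow_mem (Ideal.le_radical (pow_mem_bracketPow ha _))

end Basic


section Part2
variable {S : Type*} [CommRing S]

-- WFR → reduced (core computation): nilpotents lie in tightClosure of ⊥
example : True := trivial

lemma isReduced_of_wfr {p : ℕ} (hp : p.Prime)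
    (h : ∀ z : S, (∃ e₀ : ℕ, ∀ e : ℕ, e₀ ≤ e → z ^ p ^ e = 0) → z = 0) : IsReduced S := by
  constructor
  intro z ⟨k, hk⟩
  apply h z
  refine ⟨k, fun e he => ?_⟩
  have hk' : k ≤ p ^ e := le_trans (le_trans he (Nat.le_of_lt (Nat.lt_pow_self (n := e) hp.one_lt))) le_rfl
  rw [← Nat.add_sub_cancel' hk', pow_add, hk, zero_mul]

-- offMinimal elements are regular in a reduced ring
lemma offMinimal_regular [IsReduced S] {c : S}
    (hc : ∀ P ∈ minimalPrimes S, c ∉ P) {x : S} (hx : c * x = 0) : x = 0 := by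
  have hmem : x ∈ sInf ((⊥ : Ideal S).minimalPrimes) := by
    rw [Ideal.mem_sInf]
    intro P hP
    have : c * x ∈ P := by rw [hx]; exact P.zero_mem
    exact ((hP.1.1.mem_or_mem this).resolve_left (hc P hP))
  rw [Ideal.sInf_minimalPrimes] at hmem
  have : IsNilpotent x := by
    have := hmem
    rw [← Ideal.zero_eq_bot, ← nilradical] at this
    exact mem_nilradical.mp this
  exact this.eq_zero

-- in a reduced ring, an element of a minimal prime has an annihilator outside the prime
lemma exists_ann_of_mem_minimalPrime [IsReduced S] {P : Ideal S} (hP : P ∈ minimalPrimes S)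
    {g : S} (hg : g ∈ P) : ∃ x : S, x ∉ P ∧ x * g = 0 := by
  haveI hPp : P.IsPrime := hP.1.1
  set L := Localization.AtPrime P
  have hmem : algebraMap S L g ∈ IsLocalRing.maximalIdeal L := by
    rw [← Localization.AtPrime.comap_maximalIdeal (I := P)] at hg
    exact hg
  have hnil : IsNilpotent (algebraMap S L g) :=
    (by haveI := Ring.KrullDimLE.of_isLocalization P hP L
        exact Ring.KrullDimLE.isNilpotent_iff_mem_maximalIdeal.mpr hmem)
  obtain ⟨k, hk⟩ := hnil
  rw [← map_pow] at hk
  rw [show (0 : L) = algebraMap S L 0 by simp] at hk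
  obtain ⟨m, hm⟩ := (IsLocalization.eq_iff_exists P.primeCompl L).mp hk
  simp only [mul_zero] at hm
  rcases k with _ | j
  · simp only [pow_zero, mul_one] at hm
    exact absurd (hm ▸ P.zero_mem) m.2
  · refine ⟨m, m.2, ?_⟩
    have hmg : ((m : S) * g) ^ (j + 1) = 0 := by
      calc ((m : S) * g) ^ (j + 1) = (m:S)^j * ((m:S) * g^(j+1)) := by ring
        _ = 0 := by rw [hm, mul_zero]
    exact IsNilpotent.eq_zero ⟨j + 1, hmg⟩

-- localization of reduced is reduced
lemma isReduced_localization (M : Submonoid S) [IsReduced S] :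
    IsReduced (Localization M) := by
  constructor
  intro x ⟨k, hk⟩
  obtain ⟨⟨a, s⟩, (rfl : IsLocalization.mk' (Localization M) a s = x)⟩ :=
    IsLocalization.mk'_surjective M x
  have hs : IsUnit (algebraMap S (Localization M) s) :=
    IsLocalization.map_units _ s
  have hax : IsNilpotent (algebraMap S (Localization M) a) := by
    have := IsLocalization.mk'_spec (Localization M) a s
    refine ⟨k, ?_⟩
    rw [← this, mul_pow, hk, zero_mul]
  obtain ⟨j, hj⟩ := hax
  rw [← map_pow, show (0 : Localization M) = algebraMap S (Localization M) 0 by simp] at hj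
  obtain ⟨m, hm⟩ := (IsLocalization.eq_iff_exists M (Localization M)).mp hj
  simp only [mul_zero] at hm
  rcases j with _ | j
  · simp only [pow_zero] at hj
    rw [map_one, map_zero] at hj
    haveI := subsingleton_of_zero_eq_one hj.symm
    exact Subsingleton.elim _ _
  have hma : (m : S) * a = 0 := by
    have h2 : ((m : S) * a) ^ (j + 1) = 0 := by
      calc ((m : S) * a) ^ (j + 1) = (m:S)^j * ((m:S) * a^(j+1)) := by ring
        _ = 0 := by rw [hm, mul_zero]
    exact IsNilpotent.eq_zero ⟨j + 1, h2⟩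
  have : algebraMap S (Localization M) a = 0 := by
    have hmu : IsUnit (algebraMap S (Localization M) (m : S)) :=
      IsLocalization.map_units _ m
    have : algebraMap S (Localization M) ((m : S) * a) = 0 := by rw [hma, map_zero]
    rw [map_mul] at this
    exact (hmu.mul_right_eq_zero).mp this
  rw [IsLocalization.mk'_eq_iff_eq_mul, zero_mul]
  exact this

end Part2

section Part3
variable {S : Type*} [CommRing S] [IsNoetherianRing S]

lemma mem_of_mem_add_pow_maximal {J : Ideal S} {x : S}
    (hx : ∀ m : Ideal S, m.IsMaximal → ∀ n : ℕ, x ∈ J + m ^ n) : x ∈ J := by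
  set A := J.colon (Ideal.span {x}) with hA
  by_contra hxJ
  have hAtop : A ≠ ⊤ := by
    intro h
    have : (1 : S) ∈ A := h ▸ Submodule.mem_top
    rw [hA] at this
    rw [Ideal.mem_colon_span_singleton, one_mul] at this
    exact hxJ this
  obtain ⟨m, hm, hAm⟩ := Ideal.exists_le_maximal A hAtop
  haveI : m.IsPrime := hm.isPrime
  set L := Localization.AtPrime m
  haveI : IsNoetherianRing L :=
    IsLocalization.isNoetherianRing m.primeCompl L ‹IsNoetherianRing S›
  set ψ := algebraMap S L
  set J' := Ideal.map ψ J with hJ'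
  -- x maps into every J' + max^n
  have hmax : Ideal.map ψ m ≤ IsLocalRing.maximalIdeal L := by
    rw [Ideal.map_le_iff_le_comap]; exact (Localization.AtPrime.comap_maximalIdeal (I := m)).ge
  have hxn : ∀ n : ℕ, ψ x ∈ J' + (IsLocalRing.maximalIdeal L) ^ n := by
    intro n
    have := hx m hm n
    have h2 : ψ x ∈ Ideal.map ψ (J + m ^ n) := Ideal.mem_map_of_mem ψ this
    rw [Ideal.add_eq_sup, Ideal.map_sup, Ideal.map_pow] at h2
    rw [Ideal.add_eq_sup]
    exact (sup_le_sup le_rfl (Ideal.pow_right_mono hmax n)) h2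
  -- Krull intersection in L applied to the module L ⧸ J'
  have hψx : ψ x ∈ J' := by
    by_cases hJtop : J' = ⊤
    · rw [hJtop]; trivial
    set M := L ⧸ J'
    haveI : Module.Finite L M := Module.Finite.of_surjective
      (Submodule.mkQ (J' : Submodule L L)) (Submodule.mkQ_surjective _)
    have hbot := Ideal.iInf_pow_smul_eq_bot_of_isLocalRing
      (I := IsLocalRing.maximalIdeal L) (M := M)
      (IsLocalRing.maximalIdeal.isMaximal L).ne_top
    have hxmem : Submodule.Quotient.mk (p := (J' : Submodule L L)) (ψ x)
        ∈ (⨅ i : ℕ, (IsLocalRing.maximalIdeal L) ^ i • (⊤ : Submodule L M)) := by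
      rw [Submodule.mem_iInf]
      intro n
      obtain ⟨a, ha, b, hb, hab⟩ := Submodule.mem_sup.mp (hxn n)
      have : (Submodule.Quotient.mk (p := (J' : Submodule L L)) (ψ x)) =
          Submodule.Quotient.mk b := by
        rw [← hab]
        rw [Submodule.Quotient.mk_add]
        rw [(Submodule.Quotient.mk_eq_zero _).mpr ha, zero_add]
      rw [this]
      have : Submodule.Quotient.mk (p := (J' : Submodule L L)) b
          = b • (Submodule.Quotient.mk (p := (J' : Submodule L L)) 1) := by
        rw [← Submodule.Quotient.mk_smul, smul_eq_mul, mul_one]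
      rw [this]
      exact Submodule.smul_mem_smul hb Submodule.mem_top
    rw [hbot] at hxmem
    rw [Submodule.mem_bot] at hxmem
    exact (Submodule.Quotient.mk_eq_zero _).mp hxmem
  -- pull back: ∃ s ∉ m with s * x ∈ J, contradiction with A ≤ m
  rw [hJ'] at hψx
  obtain ⟨⟨a, s⟩, ha⟩ := (IsLocalization.mem_map_algebraMap_iff m.primeCompl L).mp hψx
  -- ha : ψ x * ψ s = ψ a  (roughly)
  rw [← map_mul] at ha
  obtain ⟨t, ht⟩ := (IsLocalization.eq_iff_exists m.primeCompl L).mp ha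
  -- ht : t * (x * s) = t * a
  have hmem : ((t : S) * s) * x ∈ J := by
    have h3 : ((t : S) * s) * x = (t : S) * (a : S) := by
      rw [← ht]; ring
    rw [h3]
    exact J.mul_mem_left _ a.2
  have : ((t : S) * s) ∈ A := by
    rw [hA]
    rw [Ideal.mem_colon_span_singleton]
    exact hmem
  have := hAm this
  rcases (‹m.IsPrime›.mem_or_mem this) with h | h
  · exact t.2 h
  · exact s.2 h

end Part3

section Equiv
variable {S R : Type*} [CommRing S] [CommRing R]

lemma comap_mem_minimalPrimes_of_equiv (e : S ≃+* R) {P : Ideal R}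
    (hP : P ∈ minimalPrimes R) : P.comap (e : S →+* R) ∈ minimalPrimes S := by
  haveI : P.IsPrime := hP.1.1
  refine ⟨⟨Ideal.IsPrime.comap _, bot_le⟩, ?_⟩
  rintro Q ⟨hQ, -⟩ hle
  have hmapQ : (Q.map (e : S →+* R)).IsPrime := Q.map_isPrime_of_equiv e
  have h1 : Q.map (e : S →+* R) ≤ P := Ideal.map_le_iff_le_comap.mpr hle
  have h2 : P ≤ Q.map (e : S →+* R) := hP.2 ⟨hmapQ, bot_le⟩ h1
  intro x hx
  have hx2 : (e : S →+* R) x ∈ Q.map (e : S →+* R) := h2 hx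
  have hcm := Ideal.comap_map_of_bijective (e : S →+* R) e.bijective (I := Q)
  rw [← hcm]
  exact Ideal.mem_comap.mpr hx2

lemma map_eq_comap_symm (e : S ≃+* R) (J : Ideal S) :
    J.map (e : S →+* R) = J.comap (e.symm : R →+* S) := by
  apply le_antisymm
  · rw [Ideal.map_le_iff_le_comap, Ideal.comap_comap]
    intro x hx
    simpa using hx
  · intro x hx
    rw [Ideal.mem_comap] at hx
    have := Ideal.mem_map_of_mem (e : S →+* R) hx
    simpa using this

lemma weaklyFRegular_of_ringEquiv (p : ℕ) (e : S ≃+* R) (h : WeaklyFRegular p S) :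
    WeaklyFRegular p R := by
  intro J
  apply Set.Subset.antisymm
  · rintro z ⟨c, hc, e₀, he⟩
    -- transfer to S
    have hcS : e.symm c ∈ offMinimal S := by
      intro P hP hmem
      exact hc _ (comap_mem_minimalPrimes_of_equiv e.symm hP) (Ideal.mem_comap.mpr hmem)
    have hz : e.symm z ∈ tightClosure p (J.comap (e : S →+* R)) := by
      refine ⟨e.symm c, hcS, e₀, fun n hn => ?_⟩
      have := he n hn
      have h2 : e.symm (c * z ^ p ^ n) ∈ Ideal.map (e.symm : R →+* S) (bracketPow J (p ^ n)) :=
        Ideal.mem_map_of_mem _ this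
      have h3 := map_bracketPow_le (e.symm : R →+* S) J (p ^ n) h2
      rw [map_eq_comap_symm e.symm J] at h3
      simp only [RingEquiv.symm_symm] at h3
      rw [map_mul, map_pow] at h3
      exact h3
    rw [h (J.comap (e : S →+* R))] at hz
    rw [SetLike.mem_coe, Ideal.mem_comap] at hz
    simpa using hz
  · exact subset_tightClosure p J

end Equiv

section Main
variable {p : ℕ}

lemma wfr_of_primary_closed {S : Type*} [CommRing S] [IsNoetherianRing S] (p : ℕ)
    (h : ∀ I : Ideal S, (∃ m : Ideal S, m.IsMaximal ∧ ∃ n : ℕ, m ^ n ≤ I) →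
      tightClosure p I ⊆ (I : Set S)) : WeaklyFRegular p S := by
  intro J
  apply Set.Subset.antisymm
  · intro z hz
    rw [SetLike.mem_coe]
    apply mem_of_mem_add_pow_maximal
    intro m hm n
    have h1 : tightClosure p J ⊆ tightClosure p (J + m ^ n) :=
      tightClosure_mono p le_sup_left
    have h2 := h (J + m ^ n) ⟨m, hm, n, le_sup_right⟩
    exact h2 (h1 hz)
  · exact subset_tightClosure p J

lemma wfr_localization_away (hp : p.Prime) {R : Type*} [CommRing R] [IsNoetherianRing R]
    [CharP R p] [IsJacobsonRing R] (hw : WeaklyFRegular p R) (f : R) :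
    WeaklyFRegular p (Localization.Away f) := by
  set S := Localization.Away f with hS
  set φ := algebraMap R (Localization.Away f) with hφ
  rcases subsingleton_or_nontrivial S with hsub | hnt
  · exact weaklyFRegular_of_subsingleton p
  haveI : CharP S p := by
    have h0 : (p : S) = 0 := by
      rw [← map_natCast φ p, CharP.cast_eq_zero R p, map_zero]
    have hdvd : ringChar S ∣ p := (CharP.cast_eq_zero_iff S (ringChar S) p).mp h0
    rcases (Nat.Prime.eq_one_or_self_of_dvd hp _ hdvd) with h1 | h1
    · exfalso
      have := CharP.cast_eq_zero_iff S (ringChar S) 1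
      rw [h1] at this
      exact one_ne_zero ((Nat.cast_one (R := S)) ▸ this.mpr dvd_rfl)
    · exact h1 ▸ ringChar.charP S
  haveI : IsNoetherianRing S :=
    IsLocalization.isNoetherianRing (Submonoid.powers f) _ ‹IsNoetherianRing R›
  haveI hredR : IsReduced R := by
    apply isReduced_of_wfr hp
    intro z hz
    have hmem : z ∈ tightClosure p (⊥ : Ideal R) := by
      refine ⟨1, one_mem_offMinimal, hz.choose, fun e he => ?_⟩
      rw [one_mul, hz.choose_spec e he]
      exact Ideal.zero_mem _
    rw [hw ⊥] at hmem
    simpa using hmem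
  haveI hredS : IsReduced S := isReduced_localization (Submonoid.powers f)
  -- key fact: c₀ avoiding minimal primes of S pulls back off minimal primes not containing f
  apply wfr_of_primary_closed
  rintro I ⟨m', hm', n, hn⟩ z' hz'
  by_cases hItop : I = ⊤
  · rw [hItop]; trivial
  have hn0 : n ≠ 0 := by
    rintro rfl
    rw [pow_zero, Ideal.one_eq_top] at hn
    exact hItop (eq_top_iff.mpr hn)
  obtain ⟨hmmax, hfm⟩ := (IsLocalization.isMaximal_iff_isMaximal_disjoint S f m').mp hm'
  set m : Ideal R := Ideal.comap φ m' with hm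
  set I₀ : Ideal R := Ideal.comap φ I with hI₀
  have hmnI₀ : m ^ n ≤ I₀ :=
    le_trans (Ideal.le_comap_pow _ n) (Ideal.comap_mono hn)
  -- write z' and c with denominators
  obtain ⟨⟨z₀, s⟩, (hzs : IsLocalization.mk' S z₀ s = z')⟩ :=
    IsLocalization.mk'_surjective (Submonoid.powers f) z'
  have hφz₀ : φ z₀ = z' * φ s := by
    rw [← hzs, IsLocalization.mk'_spec]
  have hz₀tc : φ z₀ ∈ tightClosure p I := by
    rw [hφz₀, mul_comm]
    exact tightClosure_mul_mem p hz' _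
  obtain ⟨c, hc, e₀, hce⟩ := hz₀tc
  obtain ⟨⟨c₀, s'⟩, (hcs : IsLocalization.mk' S c₀ s' = c)⟩ :=
    IsLocalization.mk'_surjective (Submonoid.powers f) c
  have hφc₀ : φ c₀ = c * φ s' := by
    rw [← hcs, IsLocalization.mk'_spec]
  -- c₀ not in minimal primes avoiding f
  have hc₀ : ∀ P ∈ minimalPrimes R, f ∉ P → c₀ ∉ P := by
    intro P hP hfP hc₀P
    obtain ⟨x, hxP, hxc⟩ := exists_ann_of_mem_minimalPrime hP hc₀P
    have hone : φ x * φ c₀ = 0 := by rw [← map_mul, hxc, map_zero]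
    rw [hφc₀] at hone
    have h2 : c * (φ x * φ s') = 0 := by rw [← hone]; ring
    have h3 : φ x * φ s' = 0 := offMinimal_regular hc h2
    have hus' : IsUnit (φ s') := IsLocalization.map_units S s'
    have h4 : φ x = 0 := by
      rw [mul_comm] at h3
      exact (hus'.mul_right_eq_zero).mp h3
    obtain ⟨mf, hmx⟩ := (IsLocalization.map_eq_zero_iff (Submonoid.powers f) S x).mp h4
    obtain ⟨k, hk⟩ := mf.2
    rw [← hk] at hmx
    rcases k with _ | j
    · simp only [pow_zero, one_mul] at hmx
      rw [hmx] at hxP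
      exact hxP P.zero_mem
    · have h5 : (f * x) ^ (j + 1) = 0 := by
        calc (f * x) ^ (j + 1) = x ^ j * (f ^ (j + 1) * x) := by ring
          _ = 0 := by rw [hmx, mul_zero]
      have h6 : f * x = 0 := IsNilpotent.eq_zero ⟨j + 1, h5⟩
      rcases hP.1.1.mem_or_mem (h6 ▸ P.zero_mem) with h | h
      · exact hfP h
      · exact hxP h
  -- construct t : annihilates f, lies in the minimal primes avoiding c₀, avoids those containing c₀
  have hfin := minimalPrimes.finite_of_isNoetherianRing R
  classical
  set Af : Finset (Ideal R) := hfin.toFinset.filter (fun P => c₀ ∈ P) with hAf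
  set W : Ideal R := ((⊥ : Ideal R).colon (Ideal.span {f})) ⊓
      sInf {P | P ∈ minimalPrimes R ∧ c₀ ∉ P} with hWdef
  have hWA : ∀ P' ∈ Af, ¬ W ≤ P' := by
    intro P' hP' hle
    rw [hAf, Finset.mem_filter, Set.Finite.mem_toFinset] at hP'
    obtain ⟨hP'min, hc₀P'⟩ := hP'
    haveI hP'prime : P'.IsPrime := hP'min.1.1
    have hfP' : f ∈ P' := by
      by_contra hf
      exact hc₀ P' hP'min hf hc₀P'
    obtain ⟨a, haP, haf⟩ := exists_ann_of_mem_minimalPrime hP'min hfP'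
    set Bf : Finset (Ideal R) := hfin.toFinset.filter (fun P => c₀ ∉ P) with hBf
    have hchoice : ∀ P ∈ Bf, ∃ b, b ∈ P ∧ b ∉ P' := by
      intro P hP
      rw [hBf, Finset.mem_filter, Set.Finite.mem_toFinset] at hP
      have hnotle : ¬ P ≤ P' := by
        intro hPle
        have hP'P : P' ≤ P := hP'min.2 ⟨hP.1.1.1, bot_le⟩ hPle
        exact hP.2 (hP'P hc₀P')
      exact SetLike.not_le_iff_exists.mp hnotle
    choose b hb1 hb2 using hchoice
    set w : R := a * ∏ P ∈ Bf.attach, b P.1 P.2 with hwdef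
    have hwW : w ∈ W := by
      rw [hWdef]
      refine Submodule.mem_inf.mpr ⟨?_, ?_⟩
      · rw [Ideal.mem_colon_span_singleton, Ideal.mem_bot, hwdef]
        calc a * (∏ P ∈ Bf.attach, b P.1 P.2) * f
            = (∏ P ∈ Bf.attach, b P.1 P.2) * (a * f) := by ring
          _ = 0 := by rw [haf, mul_zero]
      · rw [Ideal.mem_sInf]
        rintro P ⟨hPmin, hPc₀⟩
        have hPBf : P ∈ Bf := by
          rw [hBf, Finset.mem_filter, Set.Finite.mem_toFinset]
          exact ⟨hPmin, hPc₀⟩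
        have hfac := Finset.mul_prod_erase Bf.attach (fun x => b x.1 x.2)
          (Finset.mem_attach Bf ⟨P, hPBf⟩)
        rw [hwdef, ← hfac]
        exact P.mul_mem_left _ (P.mul_mem_right _ (hb1 P hPBf))
    have hwP' : w ∈ P' := hle hwW
    have hprodP' : (∏ P ∈ Bf.attach, b P.1 P.2) ∉ P' := by
      apply Finset.prod_induction _ (fun x => x ∉ P')
      · intro x y hx hy hxy
        rcases hP'prime.mem_or_mem hxy with h | h
        · exact hx h
        · exact hy h
      · intro h1
        exact hP'prime.ne_top ((Ideal.eq_top_iff_one P').mpr h1)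
      · intro P _
        exact hb2 P.1 P.2
    rcases hP'prime.mem_or_mem hwP' with h | h
    · exact haP h
    · exact hprodP' h
  -- prime avoidance
  have hprimes : ∀ P ∈ Af, P ≠ ⊥ → P ≠ ⊥ → Ideal.IsPrime P := by
    intro P hP _ _
    rw [hAf, Finset.mem_filter, Set.Finite.mem_toFinset] at hP
    exact hP.1.1.1
  have hiff := Ideal.subset_union_prime (s := Af) (f := fun P : Ideal R => P)
    ⊥ ⊥ hprimes (I := W)
  have hnot : ¬ ∃ P ∈ Af, W ≤ P := by
    rintro ⟨P, hP, hle⟩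
    exact hWA P hP hle
  rw [← hiff] at hnot
  obtain ⟨t, htW, htU⟩ := Set.not_subset.mp hnot
  have htA : ∀ P ∈ Af, t ∉ P := by
    intro P hP htP
    apply htU
    exact Set.mem_biUnion hP htP
  -- the modified multiplier c₁
  set c₁ : R := c₀ + t with hc₁def
  have hc₁ : ∀ P ∈ minimalPrimes R, c₁ ∉ P := by
    intro P hP hc₁P
    by_cases hcP : c₀ ∈ P
    · have hPA : P ∈ Af := by
        rw [hAf, Finset.mem_filter, Set.Finite.mem_toFinset]
        exact ⟨hP, hcP⟩
      have htP : t ∈ P := by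
        have h1 := P.sub_mem hc₁P hcP
        rw [hc₁def, add_sub_cancel_left] at h1
        exact h1
      exact htA P hPA htP
    · have htP : t ∈ P := by
        rw [hWdef] at htW
        have h1 : t ∈ sInf {P | P ∈ minimalPrimes R ∧ c₀ ∉ P} :=
          (Submodule.mem_inf.mp htW).2
        exact (Ideal.mem_sInf.mp h1) ⟨hP, hcP⟩
      have hcP2 : c₀ ∈ P := by
        have h1 := P.sub_mem hc₁P htP
        rw [hc₁def, add_sub_cancel_right] at h1
        exact h1
      exact hcP hcP2
  have htf : t * f = 0 := by
    rw [hWdef] at htW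
    have h1 := (Submodule.mem_inf.mp htW).1
    rwa [Ideal.mem_colon_span_singleton, Ideal.mem_bot] at h1
  have hφt : φ t = 0 := by
    apply (IsLocalization.map_eq_zero_iff (Submonoid.powers f) S t).mpr
    exact ⟨⟨f, Submonoid.mem_powers f⟩, by rw [← htf]; ring⟩
  have hφc₁ : φ c₁ = c * φ s' := by
    rw [hc₁def, map_add, hφt, add_zero, hφc₀]
  -- the Frobenius-power membership in R
  have hkey : ∀ e, e₀ ≤ e → c₁ * z₀ ^ p ^ e ∈ bracketPow I₀ (p ^ e) := by
    intro e he
    set q := p ^ e with hq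
    have h1 : φ (c₁ * z₀ ^ q) ∈ bracketPow I q := by
      rw [map_mul, map_pow, hφc₁]
      have h2 := hce e he
      rw [← hq] at h2
      have h3 : (c * φ s') * (φ z₀) ^ q = φ s' * (c * (φ z₀) ^ q) := by ring
      rw [h3]
      exact Ideal.mul_mem_left _ _ h2
    have hIc : Ideal.map φ I₀ = I := IsLocalization.map_comap (Submonoid.powers f) S I
    rw [← hIc] at h1
    have h2 := bracketPow_map_le hp φ I₀ e h1
    obtain ⟨⟨aa, sf⟩, ha⟩ := (IsLocalization.mem_map_algebraMap_iff (Submonoid.powers f) S).mp h2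
    rw [← map_mul] at ha
    obtain ⟨t₂, ht₂⟩ := (IsLocalization.eq_iff_exists (Submonoid.powers f) S).mp ha
    have hmem2 : ((t₂ : R) * sf) * (c₁ * z₀ ^ q) ∈ bracketPow I₀ q := by
      have h4 : ((t₂ : R) * sf) * (c₁ * z₀ ^ q) = (t₂ : R) * (aa : R) := by
        rw [← ht₂]; ring
      rw [h4]
      exact Ideal.mul_mem_left _ _ aa.2
    obtain ⟨K, hK⟩ := Submonoid.mem_powers_iff ((t₂ : R) * (sf : R)) f |>.mp
      (Submonoid.mul_mem _ t₂.2 sf.2)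
    by_cases hbtop : bracketPow I₀ q = ⊤
    · rw [hbtop]; trivial
    have hrad : (bracketPow I₀ q).radical = I₀.radical := radical_bracketPow hp I₀ e
    have hm_eq : (m ^ n).radical = m := by
      rw [Ideal.radical_pow m hn0, hmmax.isPrime.radical]
    have hmrad : m ≤ (bracketPow I₀ q).radical := by
      rw [hrad, ← hm_eq]
      exact Ideal.radical_mono hmnI₀
    have hradm : (bracketPow I₀ q).radical = m := by
      symm
      apply hmmax.eq_of_le ?_ hmrad
      rw [Ne, Ideal.radical_eq_top]
      exact hbtop
    have hprimary : (bracketPow I₀ q).IsPrimary :=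
      Ideal.isPrimary_of_isMaximal_radical (hradm ▸ hmmax)
    have h5 : (c₁ * z₀ ^ q) * ((t₂ : R) * (sf : R)) ∈ bracketPow I₀ q := by
      rw [mul_comm]
      exact hmem2
    rcases (Ideal.isPrimary_iff.mp hprimary).2 h5 with h | h
    · exact h
    · exfalso
      rw [hradm, ← hK] at h
      exact hfm (hmmax.isPrime.mem_of_pow_mem K h)
  -- conclude
  have hz₀tc' : z₀ ∈ tightClosure p I₀ := ⟨c₁, hc₁, e₀, hkey⟩
  rw [hw I₀] at hz₀tc'
  have hz₀I : φ z₀ ∈ I := hz₀tc'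
  rw [hφz₀] at hz₀I
  rw [SetLike.mem_coe]
  exact (Ideal.mul_unit_mem_iff_mem I (IsLocalization.map_units S s)).mp hz₀I


end Main

/-- a Noetherian Jacobson ring of characteristic `p` is semi F-regular if and
only if it is weakly F-regular. -/
theorem semiFRegular_iff_weaklyFRegular_of_jacobson (p : ℕ) (hp : p.Prime)
    (R : Type*) [CommRing R] [IsNoetherianRing R] [CharP R p] [IsJacobsonRing R] :
    SemiFRegular p R ↔ WeaklyFRegular p R := by
  constructor
  · intro h
    have h1 := h 1
    have hunits : Submonoid.powers (1 : R) ≤ IsUnit.submonoid R := by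
      rintro x ⟨n, rfl⟩
      simp [IsUnit.submonoid]
    have e : R ≃ₐ[R] Localization.Away (1 : R) :=
      IsLocalization.atUnits R (Submonoid.powers (1 : R)) hunits
    exact weaklyFRegular_of_ringEquiv p e.symm.toRingEquiv h1
  · intro h f
    exact wfr_localization_away hp h f
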